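/- Let T be the bounded operator on H̃ with block data (A, x, y, a), i.e. T(z,λ) = (Az + λx, ⟨y,z⟩ + λa). Then T* ∘ ε ∘ T = ε if and only if the following three conditions hold: A*A = I + (z ↦ ⟨y,z⟩·y) (that is, A*A equals the identity plus the rank-one operator z ↦ ⟨y,z⟩y), A*x = a·y, and |a|² − ‖x‖² = 1. -/

import Mathlib

/-- The extended Hilbert space `H̃ = H ⊕ ℂ` (Hilbert space direct sum). -/
noncomputable abbrev ExtH (H : Type*) [NormedAddCommGroup H] [InnerProductSpace ℂ H] :=
  WithLp 2 (H × ℂ)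

/-- The element `(z, a)` of `H̃`. -/
noncomputable def mk2 {H : Type*} [NormedAddCommGroup H] [InnerProductSpace ℂ H]
    (z : H) (a : ℂ) : ExtH H :=
  (WithLp.equiv 2 (H × ℂ)).symm (z, a)

open ComplexConjugate

private lemma inner_mk2 {H : Type*} [NormedAddCommGroup H] [InnerProductSpace ℂ H]
    (z w : H) (l m : ℂ) : (inner ℂ (mk2 z l) (mk2 w m) : ℂ) = inner ℂ z w + conj l * m := by
  simp [mk2, WithLp.prod_inner_apply, RCLike.inner_apply, mul_comm]

private lemma mk2_surj {H : Type*} [NormedAddCommGroup H] [InnerProductSpace ℂ H]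
    (v : ExtH H) : ∃ z l, v = mk2 z l :=
  ⟨(WithLp.equiv 2 _ v).1, (WithLp.equiv 2 _ v).2, by simp [mk2]; rfl⟩

open ContinuousLinearMap in
/-- an operator `T` on `H̃` with block data `(A, x, y, a)` satisfies
`T* ∘ ε ∘ T = ε` iff `A*A = I + (z ↦ ⟨y,z⟩y)`, `A*x = a•y` and `|a|² − ‖x‖² = 1`. -/
theorem inhomogeneous_unitary_iff_block_conditions
    {H : Type*} [NormedAddCommGroup H] [InnerProductSpace ℂ H] [CompleteSpace H]
    (ε : ExtH H →L[ℂ] ExtH H) (hε : ∀ (z : H) (l : ℂ), ε (mk2 z l) = mk2 (-z) l)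
    (T : ExtH H →L[ℂ] ExtH H) (A : H →L[ℂ] H) (x y : H) (a : ℂ)
    (hT : ∀ (z : H) (l : ℂ), T (mk2 z l) = mk2 (A z + l • x) ((inner ℂ y z : ℂ) + l * a)) :
    (adjoint T ∘L ε ∘L T = ε) ↔
      ((∀ z : H, adjoint A (A z) = z + (inner ℂ y z : ℂ) • y) ∧
        adjoint A x = a • y ∧ ‖a‖ ^ 2 - ‖x‖ ^ 2 = 1) := by
  have key : (adjoint T ∘L ε ∘L T = ε) ↔
      ∀ (z : H) (l : ℂ) (w : H) (m : ℂ),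
        (inner ℂ (A z + l • x) (-(A w + m • x)) : ℂ)
            + conj ((inner ℂ y z : ℂ) + l * a) * ((inner ℂ y w : ℂ) + m * a)
          = inner ℂ z (-w) + conj l * m := by
    have lhs_eq : ∀ (z l w m), (inner ℂ (T (mk2 z l)) (ε (T (mk2 w m))) : ℂ)
        = inner ℂ (A z + l • x) (-(A w + m • x))
            + conj ((inner ℂ y z : ℂ) + l * a) * ((inner ℂ y w : ℂ) + m * a) := by
      intro z l w m
      rw [hT, hT, hε, inner_mk2]
    have rhs_eq : ∀ (z l w m : _), (inner ℂ (mk2 z l) (ε (mk2 w m)) : ℂ)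
        = inner ℂ z (-w) + conj l * m := by
      intro z l w m
      rw [hε, inner_mk2]
    constructor
    · intro h z l w m
      have h1 : adjoint T (ε (T (mk2 w m))) = ε (mk2 w m) :=
        congrFun (congrArg DFunLike.coe h) (mk2 w m)
      rw [← lhs_eq, ← rhs_eq z l w m, ← h1, ContinuousLinearMap.adjoint_inner_right]
    · intro h
      ext u
      obtain ⟨w, m, rfl⟩ := mk2_surj u
      apply ext_inner_left ℂ
      intro v
      obtain ⟨z, l, rfl⟩ := mk2_surj v
      simp only [ContinuousLinearMap.comp_apply, ContinuousLinearMap.adjoint_inner_right]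
      rw [lhs_eq, rhs_eq]
      exact h z l w m
  rw [key]
  constructor
  · intro P
    refine ⟨?_, ?_, ?_⟩
    · intro z
      apply ext_inner_right ℂ
      intro w
      have h := P z 0 w 0
      simp only [zero_smul, add_zero, zero_mul, map_zero, zero_add, inner_neg_right, map_add,
        map_mul] at h
      rw [ContinuousLinearMap.adjoint_inner_left, inner_add_left, inner_smul_left]
      linear_combination -h
    · apply ext_inner_right ℂ
      intro w
      have h := P 0 1 w 0
      simp only [map_zero, one_smul, zero_add, zero_smul, add_zero, one_mul, zero_mul,
        inner_zero_left, inner_zero_right, inner_neg_right, map_one, mul_zero] at h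
      rw [ContinuousLinearMap.adjoint_inner_left, inner_smul_left]
      linear_combination -h
    · have h := P 0 1 0 1
      simp only [map_zero, one_smul, zero_add, zero_smul, add_zero, one_mul, map_one,
        inner_zero_left, inner_neg_right, inner_zero_right, mul_one] at h
      rw [inner_self_eq_norm_sq_to_K (𝕜 := ℂ) x, RCLike.conj_mul] at h
      have h' : (-‖x‖ ^ 2 + ‖a‖ ^ 2 : ℝ) = 1 := by
        apply RCLike.ofReal_injective (K := ℂ)
        push_cast
        linear_combination h
      linarith
  · rintro ⟨h1, h2, h3⟩ z l w m
    have hAA : (inner ℂ (A z) (A w) : ℂ)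
        = inner ℂ z w + conj (inner ℂ y z : ℂ) * (inner ℂ y w : ℂ) := by
      rw [← ContinuousLinearMap.adjoint_inner_left, h1, inner_add_left, inner_smul_left]
    have hxA : (inner ℂ x (A w) : ℂ) = conj a * (inner ℂ y w : ℂ) := by
      rw [← ContinuousLinearMap.adjoint_inner_left, h2, inner_smul_left]
    have hAx : (inner ℂ (A z) x : ℂ) = a * conj (inner ℂ y z : ℂ) := by
      rw [← inner_conj_symm, ← ContinuousLinearMap.adjoint_inner_left, h2, inner_smul_left]
      rw [← inner_conj_symm y z]
      simp [mul_comm]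
    have hxx : (inner ℂ x x : ℂ) = (‖x‖ : ℂ) ^ 2 := inner_self_eq_norm_sq_to_K x
    have hca : conj a * a = (‖a‖ : ℂ) ^ 2 := RCLike.conj_mul a
    have h3c : ((‖a‖ : ℂ)) ^ 2 - ((‖x‖ : ℂ)) ^ 2 = 1 := by exact_mod_cast h3
    simp only [inner_neg_right, inner_add_left, inner_add_right, inner_smul_left,
      inner_smul_right, map_add, map_mul]
    linear_combination (-1 : ℂ) * hAA - conj l * hxA - m * hAx - (conj l * m) * hxx
      + (conj l * m) * hca + (conj l * m) * h3c
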